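/- Let A, B ⊂ ℕ be finite sets and N := |A ∪ B|. Then Ψ(A) + Ψ(B) ≥ (Φ(4, N+3) − 5)/4. -/
import Mathlib


/-- `∇_4(n) := max{k ≥ 0 : k(k+1)/2 ≤ n}`. -/
def nabla4 (n : ℕ) : ℕ := Nat.findGreatest (fun k => Nat.choose (k + 1) 2 ≤ n) n

/-- `Φ(4, M) := Σ_{n=0}^{M-1} 2^{∇_4(n)}`. -/
def Phi4 (M : ℕ) : ℕ := ∑ n ∈ Finset.range M, 2 ^ nabla4 n

/-- `Ψ_L(E) := (1−L)·2^L − 1 + Σ_{n ∈ E} 2^{min(∇_4(n), L)}`, an integer. -/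
def PsiL (E : Finset ℕ) (L : ℕ) : ℤ :=
  (1 - (L : ℤ)) * 2 ^ L - 1 + ∑ n ∈ E, 2 ^ min (nabla4 n) L

/-- `Ψ(E) := sup_{L ∈ ℕ} Ψ_L(E)`. -/
noncomputable def Psi (E : Finset ℕ) : ℤ := sSup (Set.range (PsiL E))

/-! ### Auxiliary lemmas -/

/-- Triangular numbers. -/
def tri (k : ℕ) : ℕ := k * (k + 1) / 2

lemma tri_succ (k : ℕ) : tri (k + 1) = tri k + (k + 1) := by
  obtain ⟨m, hm⟩ := Nat.even_mul_succ_self k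
  have h2 : (k + 1) * (k + 1 + 1) = k * (k + 1) + 2 * (k + 1) := by ring
  unfold tri
  omega

lemma choose_eq_tri (k : ℕ) : Nat.choose (k + 1) 2 = tri k := by
  rw [Nat.choose_two_right, Nat.add_sub_cancel, Nat.mul_comm]
  rfl

lemma tri_mono : Monotone tri := fun a b h =>
  Nat.div_le_div_right (Nat.mul_le_mul h (by omega))

lemma le_tri (k : ℕ) : k ≤ tri k := by
  induction k with
  | zero => simp [tri]
  | succ k ih => rw [tri_succ]; omega

lemma nabla4_ge {L n : ℕ} (h : tri L ≤ n) : L ≤ nabla4 n :=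
  Nat.le_findGreatest (le_trans (le_tri L) h) (by rw [choose_eq_tri]; exact h)

lemma tri_nabla4_le (n : ℕ) : tri (nabla4 n) ≤ n := by
  have h : Nat.choose (nabla4 n + 1) 2 ≤ n :=
    Nat.findGreatest_spec (P := fun k => Nat.choose (k + 1) 2 ≤ n) (m := 0)
      (Nat.zero_le n) (by simp)
  rwa [choose_eq_tri] at h

lemma lt_tri_nabla4_succ (n : ℕ) : n < tri (nabla4 n + 1) := by
  by_contra h
  push_neg at h
  have h1 : nabla4 n + 1 ≤ nabla4 n :=
    Nat.le_findGreatest (le_trans (le_tri _) h) (by rw [choose_eq_tri]; exact h)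
  omega

lemma nabla4_mono {a b : ℕ} (h : a ≤ b) : nabla4 a ≤ nabla4 b :=
  nabla4_ge (le_trans (tri_nabla4_le a) h)

lemma nabla4_eq {K n : ℕ} (h1 : tri K ≤ n) (h2 : n < tri (K + 1)) : nabla4 n = K := by
  have ha := nabla4_ge h1
  have hb := tri_nabla4_le n
  by_contra h
  have h3 : K + 1 ≤ nabla4 n := by omega
  have := le_trans (tri_mono h3) hb
  omega

lemma nabla4_lt_of_lt_tri {L n : ℕ} (h : n < tri L) : nabla4 n < L := by
  by_contra hc
  push_neg at hc
  have := le_trans (tri_mono hc) (tri_nabla4_le n)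
  omega

/-- Summing a function constant on a block. -/
lemma sum_block (f : ℕ → ℕ) (m j c : ℕ) (hf : ∀ i < j, f (m + i) = c) :
    ∑ n ∈ Finset.range (m + j), f n = (∑ n ∈ Finset.range m, f n) + j * c := by
  induction j with
  | zero => simp
  | succ j ih =>
    rw [show m + (j + 1) = (m + j) + 1 from rfl, Finset.sum_range_succ,
      ih (fun i hi => hf i (by omega)), hf j (by omega)]
    ring

lemma phi4_tri (K : ℕ) : (Phi4 (tri K) : ℤ) = ((K : ℤ) - 1) * 2 ^ K + 1 := by
  induction K with
  | zero => simp [Phi4, tri]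
  | succ K ih =>
    have h : Phi4 (tri (K + 1)) = Phi4 (tri K) + (K + 1) * 2 ^ K := by
      unfold Phi4
      rw [tri_succ]
      exact sum_block _ _ _ _ (fun i hi => by
        rw [nabla4_eq (K := K) (by omega) (by rw [tri_succ]; omega)])
    rw [h]
    push_cast
    rw [ih]
    ring

lemma phi4_eval {K m : ℕ} (h1 : tri K ≤ m) (h2 : m ≤ tri (K + 1)) :
    (Phi4 m : ℤ) = ((K : ℤ) - 1) * 2 ^ K + 1 + ((m : ℤ) - tri K) * 2 ^ K := by
  obtain ⟨j, rfl⟩ : ∃ j, m = tri K + j := ⟨m - tri K, by omega⟩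
  have h : Phi4 (tri K + j) = Phi4 (tri K) + j * 2 ^ K := by
    unfold Phi4
    exact sum_block (fun n => 2 ^ nabla4 n) (tri K) j (2 ^ K) (fun i hi => by
      show 2 ^ nabla4 (tri K + i) = 2 ^ K
      rw [nabla4_eq (K := K) (by omega) (by omega)])
  rw [h]
  push_cast
  rw [phi4_tri]
  ring

lemma sum_min_eval {L N : ℕ} (h : tri L ≤ N) :
    ((∑ n ∈ Finset.range N, 2 ^ min (nabla4 n) L : ℕ) : ℤ) =
      ((L : ℤ) - 1) * 2 ^ L + 1 + ((N : ℤ) - tri L) * 2 ^ L := by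
  obtain ⟨j, rfl⟩ : ∃ j, N = tri L + j := ⟨N - tri L, by omega⟩
  have h1 : ∑ n ∈ Finset.range (tri L + j), 2 ^ min (nabla4 n) L =
      (∑ n ∈ Finset.range (tri L), 2 ^ min (nabla4 n) L) + j * 2 ^ L :=
    sum_block (fun n => 2 ^ min (nabla4 n) L) (tri L) j (2 ^ L) (fun i hi => by
      show 2 ^ min (nabla4 (tri L + i)) L = 2 ^ L
      rw [min_eq_right (nabla4_ge (by omega))])
  have h2 : ∑ n ∈ Finset.range (tri L), 2 ^ min (nabla4 n) L = Phi4 (tri L) := by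
    apply Finset.sum_congr rfl
    intro n hn
    rw [min_eq_left (le_of_lt (nabla4_lt_of_lt_tri (Finset.mem_range.mp hn)))]
  rw [h1, h2]
  push_cast [h]
  rw [phi4_tri]
  ring

lemma psiL_le_psi (E : Finset ℕ) (L : ℕ) : PsiL E L ≤ Psi E := by
  apply le_csSup _ (Set.mem_range_self L)
  refine ⟨∑ n ∈ E, (2 : ℤ) ^ nabla4 n, ?_⟩
  rintro x ⟨M, rfl⟩
  unfold PsiL
  have h1 : (1 - (M : ℤ)) * 2 ^ M - 1 ≤ 0 := by
    rcases Nat.eq_zero_or_pos M with hM | hM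
    · subst hM; norm_num
    · have hp : (0 : ℤ) < 2 ^ M := by positivity
      have hm : (1 - (M : ℤ)) ≤ 0 := by
        have : (1 : ℤ) ≤ (M : ℤ) := by exact_mod_cast hM
        omega
      nlinarith
  have h2 : ∑ n ∈ E, (2 : ℤ) ^ min (nabla4 n) M ≤ ∑ n ∈ E, (2 : ℤ) ^ nabla4 n :=
    Finset.sum_le_sum fun n _ =>
      pow_le_pow_right₀ (by norm_num) (min_le_left _ _)
  linarith

/-- A sum of a monotone function over a finset of size `m` dominates the sum over `range m`. -/
lemma sum_range_card_le (f : ℕ → ℕ) (hf : Monotone f) (s : Finset ℕ) :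
    ∑ n ∈ Finset.range s.card, f n ≤ ∑ n ∈ s, f n := by
  induction s using Finset.strongInduction with
  | _ s ih =>
    rcases s.eq_empty_or_nonempty with rfl | hs
    · simp
    · set m := s.max' hs with hm
      have hmem : m ∈ s := s.max'_mem hs
      have hsub : s ⊆ Finset.range (m + 1) := fun x hx =>
        Finset.mem_range.mpr (Nat.lt_succ_of_le (s.le_max' x hx))
      have hcard : s.card ≤ m + 1 := by
        calc s.card ≤ (Finset.range (m + 1)).card := Finset.card_le_card hsub
        _ = m + 1 := Finset.card_range _
      have hcard' : (s.erase m).card = s.card - 1 := Finset.card_erase_of_mem hmem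
      have hpos : 1 ≤ s.card := Finset.card_pos.mpr hs
      have ihe := ih (s.erase m) (Finset.erase_ssubset hmem)
      have hsum : ∑ n ∈ s, f n = (∑ n ∈ s.erase m, f n) + f m :=
        (Finset.sum_erase_add s f hmem).symm
      have hrange : ∑ n ∈ Finset.range s.card, f n =
          (∑ n ∈ Finset.range (s.card - 1), f n) + f (s.card - 1) := by
        rw [show s.card = (s.card - 1) + 1 by omega, Finset.sum_range_succ]
        simp
      rw [hsum, hrange, hcard'] at *
      exact Nat.add_le_add ihe (hf (by omega))

lemma sum_union_le' (A B : Finset ℕ) (f : ℕ → ℕ) :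
    ∑ n ∈ A ∪ B, f n ≤ (∑ n ∈ A, f n) + ∑ n ∈ B, f n := by
  have := Finset.sum_union_inter (s₁ := A) (s₂ := B) (f := f)
  omega

/-- For finite `A, B ⊂ ℕ` with `N := |A ∪ B|`,
`Ψ(A) + Ψ(B) ≥ (Φ(4, N+3) − 5)/4`. -/
theorem psi_union (A B : Finset ℕ) :
    Psi A + Psi B ≥ ((Phi4 ((A ∪ B).card + 3) : ℤ) - 5) / 4 := by
  set N := (A ∪ B).card with hN
  by_cases h0 : N = 0
  · -- both sets are empty
    have hAB : A ∪ B = ∅ := Finset.card_eq_zero.mp h0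
    have hA : A = ∅ := by
      have := Finset.subset_union_left (s₁ := A) (s₂ := B)
      rw [hAB] at this
      exact Finset.subset_empty.mp this
    have hB : B = ∅ := by
      have := Finset.subset_union_right (s₁ := A) (s₂ := B)
      rw [hAB] at this
      exact Finset.subset_empty.mp this
    have h1 : (0 : ℤ) ≤ Psi A := by
      linarith [psiL_le_psi A 0, show PsiL A 0 = 0 by simp [PsiL, hA]]
    have h2 : (0 : ℤ) ≤ Psi B := by
      linarith [psiL_le_psi B 0, show PsiL B 0 = 0 by simp [PsiL, hB]]
    have h3 : Phi4 (N + 3) = 5 := by rw [h0]; decide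
    rw [h3]
    norm_num
    linarith
  · have hN1 : 1 ≤ N := by omega
    set K := nabla4 (N + 2) with hKdef
    have hK2 : 2 ≤ K := nabla4_ge (show tri 2 ≤ N + 2 by unfold tri; omega)
    set L := K - 2 with hLdef
    have hKL : K = L + 2 := by omega
    have htriKN : tri K ≤ N + 2 := tri_nabla4_le _
    have htriK1 : N + 2 < tri (K + 1) := lt_tri_nabla4_succ _
    have htriLK : tri K = tri L + (2 * L + 3) := by
      rw [hKL, tri_succ, tri_succ]; omega
    have htriLN : tri L ≤ N := by omega
    -- evaluate Phi4 (N+3)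
    have hphi : (Phi4 (N + 3) : ℤ) =
        ((K : ℤ) - 1) * 2 ^ K + 1 + ((N : ℤ) + 3 - tri K) * 2 ^ K := by
      have := phi4_eval (K := K) (m := N + 3) (by omega) (by omega)
      push_cast at this ⊢
      linarith
    -- evaluate the "worst case" sum
    have hS := sum_min_eval htriLN
    -- lower bound the Psi's
    have hA := psiL_le_psi A L
    have hB := psiL_le_psi B L
    -- sum over range N ≤ sum over A ∪ B ≤ sum A + sum B (in ℕ)
    have hmono : Monotone (fun n => 2 ^ min (nabla4 n) L) := fun a b h =>
      Nat.pow_le_pow_right (by norm_num) (min_le_min (nabla4_mono h) le_rfl)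
    have hchain : (∑ n ∈ Finset.range N, 2 ^ min (nabla4 n) L) ≤
        (∑ n ∈ A, 2 ^ min (nabla4 n) L) + ∑ n ∈ B, 2 ^ min (nabla4 n) L :=
      le_trans (sum_range_card_le _ hmono (A ∪ B)) (sum_union_le' A B _)
    have hchainZ : ((∑ n ∈ Finset.range N, 2 ^ min (nabla4 n) L : ℕ) : ℤ) ≤
        (∑ n ∈ A, (2 : ℤ) ^ min (nabla4 n) L) + ∑ n ∈ B, (2 : ℤ) ^ min (nabla4 n) L := by
      exact_mod_cast hchain
    -- the key exact identity
    have hx : (2 : ℤ) ^ K = 4 * 2 ^ L := by rw [hKL, pow_add]; ring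
    have hEq : (Phi4 (N + 3) : ℤ) - 5 =
        4 * (2 * ((1 - (L : ℤ)) * 2 ^ L - 1) +
          (((L : ℤ) - 1) * 2 ^ L + 1 + ((N : ℤ) - tri L) * 2 ^ L)) := by
      rw [hphi, hx]
      have htriLKZ : (tri K : ℤ) = (tri L : ℤ) + (2 * (L : ℤ) + 3) := by
        exact_mod_cast htriLK
      have hKZ : (K : ℤ) = (L : ℤ) + 2 := by exact_mod_cast hKL
      rw [htriLKZ, hKZ]
      ring
    have hfinal : 2 * ((1 - (L : ℤ)) * 2 ^ L - 1) +
        (((L : ℤ) - 1) * 2 ^ L + 1 + ((N : ℤ) - tri L) * 2 ^ L) ≤ Psi A + Psi B := by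
      have hPA : PsiL A L = (1 - (L : ℤ)) * 2 ^ L - 1 + ∑ n ∈ A, (2 : ℤ) ^ min (nabla4 n) L := rfl
      have hPB : PsiL B L = (1 - (L : ℤ)) * 2 ^ L - 1 + ∑ n ∈ B, (2 : ℤ) ^ min (nabla4 n) L := rfl
      rw [← hS]
      linarith [hchainZ, hA, hB, hPA ▸ hA, hPB ▸ hB]
    calc ((Phi4 (N + 3) : ℤ) - 5) / 4
        = 2 * ((1 - (L : ℤ)) * 2 ^ L - 1) +
          (((L : ℤ) - 1) * 2 ^ L + 1 + ((N : ℤ) - tri L) * 2 ^ L) := by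
          rw [hEq]; omega
      _ ≤ Psi A + Psi B := hfinal
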